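/- Let H and K be separable Hilbert spaces, X : H → K a bounded linear operator, and A : H → H a positive semidefinite bounded self-adjoint operator. Then for every σ ∈ [0,1], ‖X A^σ‖ ≤ ‖X‖^{1−σ} ‖X A‖^σ, where A^σ denotes the operator power. -/

import Mathlib

open ContinuousLinearMap

private lemma stmt10.auxRpow {θ l x : ℝ} (hθ0 : 0 ≤ θ) (hθ1 : θ ≤ 1) (hl : 0 < l) (hx : 0 ≤ x) :
    x ^ θ ≤ l ^ θ * (1 - θ) + l ^ (θ - 1) * θ * x := by
  have h := Real.geom_mean_le_arith_mean2_weighted (sub_nonneg.2 hθ1) hθ0 zero_le_one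
    (div_nonneg hx hl.le) (by ring)
  rw [Real.one_rpow, one_mul, mul_one] at h
  have h2 : l ^ θ * ((x / l) ^ θ) ≤ l ^ θ * ((1 - θ) + θ * (x / l)) :=
    mul_le_mul_of_nonneg_left h (Real.rpow_nonneg hl.le θ)
  have e1 : l ^ θ * ((x / l) ^ θ) = x ^ θ := by
    rw [Real.div_rpow hx hl.le]; field_simp
  have e2 : l ^ θ * ((1 - θ) + θ * (x / l)) = l ^ θ * (1 - θ) + l ^ (θ - 1) * θ * x := by
    rw [Real.rpow_sub hl, Real.rpow_one]; field_simp
  rw [e1, e2] at h2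
  exact h2

set_option maxHeartbeats 1000000 in
private lemma stmt10.keyLemma {H K : Type*}
    [NormedAddCommGroup H] [InnerProductSpace ℂ H] [CompleteSpace H]
    [NormedAddCommGroup K] [InnerProductSpace ℂ K] [CompleteSpace K]
    (A : H →L[ℂ] H) (hA : A.IsPositive) (Y : H →L[ℂ] K) {θ l : ℝ}
    (hθ0 : 0 ≤ θ) (hθ1 : θ ≤ 1) (hl : 0 < l) :
    ‖Y ∘L cfc (fun x : ℝ => x ^ θ) A ∘L adjoint Y‖ ≤
      l ^ θ * (1 - θ) * ‖Y ∘L adjoint Y‖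
        + l ^ (θ - 1) * θ * ‖Y ∘L A ∘L adjoint Y‖ := by
  have hA0 : (0 : H →L[ℂ] H) ≤ A := (nonneg_iff_isPositive A).2 hA
  have hspec : ∀ x ∈ spectrum ℝ A, 0 ≤ x := fun x hx => spectrum_nonneg_of_nonneg hA0 hx
  have hc : Continuous (fun x : ℝ => x ^ θ) :=
    continuous_iff_continuousAt.mpr fun x => Real.continuousAt_rpow_const x θ (Or.inr hθ0)
  set c := l ^ θ * (1 - θ) with hc'
  set d := l ^ (θ - 1) * θ with hd'
  have hcnn : 0 ≤ c := mul_nonneg (Real.rpow_nonneg hl.le θ) (sub_nonneg.2 hθ1)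
  have hdnn : 0 ≤ d := mul_nonneg (Real.rpow_nonneg hl.le _) hθ0
  have haff : cfc (fun x : ℝ => c + d * x) A = c • (1 : H →L[ℂ] H) + d • A := by
    rw [cfc_add A (fun _ => c) (fun x => d * x) continuousOn_const
      ((continuous_const.mul continuous_id).continuousOn),
      cfc_const c A hA.isSelfAdjoint, cfc_const_mul d (fun x : ℝ => x) A ((continuous_id).continuousOn),
      cfc_id' ℝ A hA.isSelfAdjoint, Algebra.algebraMap_eq_smul_one]
  have hle : cfc (fun x : ℝ => x ^ θ) A ≤ c • (1 : H →L[ℂ] H) + d • A := by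
    rw [← haff]
    exact cfc_mono (fun x hx => stmt10.auxRpow hθ0 hθ1 hl (hspec x hx)) hc.continuousOn
      ((continuous_const.add (continuous_const.mul continuous_id)).continuousOn)
  have hdiff : ((c • (1 : H →L[ℂ] H) + d • A) - cfc (fun x : ℝ => x ^ θ) A).IsPositive :=
    (le_def _ _).1 hle
  have hconj : (Y ∘L cfc (fun x : ℝ => x ^ θ) A ∘L adjoint Y) ≤
      Y ∘L (c • (1 : H →L[ℂ] H) + d • A) ∘L adjoint Y := by
    rw [le_def]
    have h5 := hdiff.conj_adjoint Y
    have heq : Y ∘L (((c • (1 : H →L[ℂ] H) + d • A) - cfc (fun x : ℝ => x ^ θ) A) ∘L adjoint Y)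
        = Y ∘L ((c • (1 : H →L[ℂ] H) + d • A) ∘L adjoint Y)
          - Y ∘L ((cfc (fun x : ℝ => x ^ θ) A) ∘L adjoint Y) := by
      rw [sub_comp, comp_sub]
    rwa [heq] at h5
  have hnonneg : (0 : K →L[ℂ] K) ≤ Y ∘L cfc (fun x : ℝ => x ^ θ) A ∘L adjoint Y := by
    rw [nonneg_iff_isPositive]
    have hpos : (cfc (fun x : ℝ => x ^ θ) A).IsPositive := by
      rw [← nonneg_iff_isPositive]
      exact cfc_nonneg fun x hx => Real.rpow_nonneg (hspec x hx) θ
    exact hpos.conj_adjoint Y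
  have hnorm : ‖Y ∘L cfc (fun x : ℝ => x ^ θ) A ∘L adjoint Y‖ ≤
      ‖Y ∘L (c • (1 : H →L[ℂ] H) + d • A) ∘L adjoint Y‖ :=
    CStarAlgebra.norm_le_norm_of_nonneg_of_le hnonneg hconj
  refine hnorm.trans ?_
  have hexp : Y ∘L (c • (1 : H →L[ℂ] H) + d • A) ∘L adjoint Y
      = c • (Y ∘L adjoint Y) + d • (Y ∘L A ∘L adjoint Y) := by
    ext x
    simp
  rw [hexp]
  calc ‖c • (Y ∘L adjoint Y) + d • (Y ∘L A ∘L adjoint Y)‖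
      ≤ ‖c • (Y ∘L adjoint Y)‖ + ‖d • (Y ∘L A ∘L adjoint Y)‖ := norm_add_le _ _
    _ ≤ c * ‖Y ∘L adjoint Y‖ + d * ‖Y ∘L A ∘L adjoint Y‖ := by
        rw [norm_smul, norm_smul, Real.norm_of_nonneg hcnn, Real.norm_of_nonneg hdnn]
    _ = _ := by ring

private lemma stmt10.calc1 {a b σ : ℝ} (ha : 0 < a) (hb : 0 < b) :
    (b / a) ^ (σ + σ) * (a * a) = (a ^ (1 - σ) * b ^ σ) * (a ^ (1 - σ) * b ^ σ) := by
  rw [Real.div_rpow hb.le ha.le, div_mul_eq_mul_div,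
    div_eq_iff (Real.rpow_pos_of_pos ha _).ne']
  rw [show (a ^ (1 - σ) * b ^ σ) * (a ^ (1 - σ) * b ^ σ) * a ^ (σ + σ)
      = (a ^ (1 - σ) * (a ^ (1 - σ) * a ^ (σ + σ))) * (b ^ σ * b ^ σ) by ring,
    ← Real.rpow_add ha, ← Real.rpow_add ha, ← Real.rpow_add hb]
  rw [show (1 - σ) + ((1 - σ) + (σ + σ)) = 1 + 1 by ring]
  rw [show a * a = a ^ ((1:ℝ) + 1) by rw [Real.rpow_add ha, Real.rpow_one]]
  ring

private lemma stmt10.calc2 {a b σ : ℝ} (ha : 0 < a) (hb : 0 < b) :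
    (b / a) ^ (σ + σ - 1) * (b * a) = (a ^ (1 - σ) * b ^ σ) * (a ^ (1 - σ) * b ^ σ) := by
  rw [Real.div_rpow hb.le ha.le, div_mul_eq_mul_div,
    div_eq_iff (Real.rpow_pos_of_pos ha _).ne']
  rw [show (a ^ (1 - σ) * b ^ σ) * (a ^ (1 - σ) * b ^ σ) * a ^ (σ + σ - 1)
      = (a ^ (1 - σ) * (a ^ (1 - σ) * a ^ (σ + σ - 1))) * (b ^ σ * b ^ σ) by ring,
    ← Real.rpow_add ha, ← Real.rpow_add ha, ← Real.rpow_add hb]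
  rw [show (1 - σ) + ((1 - σ) + (σ + σ - 1)) = 1 by ring, Real.rpow_one]
  rw [show b ^ (σ + σ - 1) * (b * a) = (b ^ (σ + σ - 1) * b) * a by ring,
    ← Real.rpow_add_one hb.ne' (σ + σ - 1)]
  rw [show σ + σ - 1 + 1 = σ + σ by ring]
  ring

private lemma stmt10.sqle {a b : ℝ} (ha : 0 ≤ a) (hb : 0 ≤ b) (h : a * a ≤ b * b) : a ≤ b := by
  nlinarith

set_option maxHeartbeats 1000000 in
/-- **Cordes-type interpolation inequality.** Let `H, K` be Hilbert spaces,
`X : H → K` a bounded linear operator and `A : H → H` a positive (semidefinite, self-adjoint)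
bounded operator.  Then for every `σ ∈ [0,1]`, `‖X A^σ‖ ≤ ‖X‖^{1−σ} ‖X A‖^σ`, where `A^σ` is
given by the continuous functional calculus. -/
theorem stmt10 {H K : Type*} [NormedAddCommGroup H] [InnerProductSpace ℂ H] [CompleteSpace H]
    [NormedAddCommGroup K] [InnerProductSpace ℂ K] [CompleteSpace K]
    (X : H →L[ℂ] K) (A : H →L[ℂ] H) (hA : A.IsPositive)
    (σ : ℝ) (hσ : σ ∈ Set.Icc (0 : ℝ) 1) :
    ‖X ∘L cfc (fun x : ℝ => x ^ σ) A‖ ≤ ‖X‖ ^ (1 - σ) * ‖X ∘L A‖ ^ σ := by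
  obtain ⟨hσ0, hσ1⟩ := hσ
  have hA0 : (0 : H →L[ℂ] H) ≤ A := (nonneg_iff_isPositive A).2 hA
  have hspec : ∀ x ∈ spectrum ℝ A, 0 ≤ x := fun x hx => spectrum_nonneg_of_nonneg hA0 hx
  have hcont : ∀ s : ℝ, 0 ≤ s → Continuous (fun x : ℝ => x ^ s) := fun s hs =>
    continuous_iff_continuousAt.mpr fun x => Real.continuousAt_rpow_const x s (Or.inr hs)
  set P : ℝ → (H →L[ℂ] H) := fun s => cfc (fun x : ℝ => x ^ s) A with hP
  have hPmul : ∀ s t : ℝ, 0 ≤ s → 0 ≤ t → P s ∘L P t = P (s + t) := by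
    intro s t hs ht
    show P s * P t = P (s + t)
    rw [hP]
    rw [← cfc_mul _ _ A ((hcont s hs).continuousOn) ((hcont t ht).continuousOn)]
    exact cfc_congr fun x hx => (Real.rpow_add_of_nonneg (hspec x hx) hs ht).symm
  have hPσ : cfc (fun x : ℝ => x ^ σ) A = P σ := by rw [hP]
  have hPs : ∀ s : ℝ, P s = cfc (fun x : ℝ => x ^ s) A := fun s => by rw [hP]
  rw [hPσ]
  have hsa : ∀ s : ℝ, adjoint (P s) = P s := fun s =>
    (cfc_predicate (fun x : ℝ => x ^ s) A : IsSelfAdjoint (P s)).adjoint_eq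
  have hP1 : P 1 = A := by
    rw [hP]
    exact (cfc_congr fun x _ => Real.rpow_one x).trans (cfc_id' ℝ A hA.isSelfAdjoint)
  have hP0 : P 0 = 1 := by
    rw [hP]
    refine (cfc_congr fun x _ => Real.rpow_zero x).trans ?_
    rw [cfc_const 1 A hA.isSelfAdjoint, map_one]
  have hnormsq : ∀ (Z : H →L[ℂ] K), ‖Z ∘L adjoint Z‖ = ‖Z‖ * ‖Z‖ := by
    intro Z
    have h1 := norm_adjoint_comp_self (adjoint Z)
    rwa [adjoint_adjoint, LinearIsometryEquiv.norm_map] at h1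
  have hsq : ∀ s : ℝ, 0 ≤ s →
      ‖X ∘L P s‖ * ‖X ∘L P s‖ = ‖X ∘L (P (s + s) ∘L adjoint X)‖ := by
    intro s hs
    rw [← hnormsq (X ∘L P s), adjoint_comp, hsa s, comp_assoc, ← comp_assoc (P s) (P s) (adjoint X),
      hPmul s s hs hs]
  -- trivial case : X = 0
  rcases eq_or_lt_of_le (norm_nonneg X) with hX0 | hX
  · have : X = 0 := norm_eq_zero.1 hX0.symm
    subst this
    rw [zero_comp, norm_zero]
    positivity
  -- case X A = 0
  rcases eq_or_lt_of_le (norm_nonneg (X ∘L A)) with hXA0 | hXA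
  · rcases eq_or_lt_of_le hσ0 with hσz | hσpos
    · subst hσz
      rw [hP0, one_def, comp_id, sub_zero, Real.rpow_one, Real.rpow_zero, mul_one]
    · have hXA : X ∘L A = 0 := norm_eq_zero.1 hXA0.symm
      have halfstep : ∀ t : ℝ, 0 ≤ t → X ∘L P t = 0 → X ∘L P (t/2) = 0 := by
        intro t ht h0
        have h1 := hsq (t/2) (by positivity)
        rw [show t/2 + t/2 = t by ring, ← comp_assoc, h0, zero_comp, norm_zero] at h1
        exact norm_eq_zero.1 (mul_self_eq_zero.1 h1)
      have hiter : ∀ n : ℕ, X ∘L P ((1:ℝ)/2^n) = 0 := by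
        intro n
        induction n with
        | zero => simpa [hP1] using hXA
        | succ n ih =>
          have := halfstep ((1:ℝ)/2^n) (by positivity) ih
          rwa [show (1:ℝ)/2^n/2 = 1/2^(n+1) by ring] at this
      obtain ⟨n, hn⟩ := exists_pow_lt_of_lt_one hσpos (by norm_num : (1:ℝ)/2 < 1)
      have hn' : (1:ℝ)/2^n ≤ σ := by
        rw [div_pow, one_pow] at hn
        exact hn.le
      have hzero : X ∘L P σ = 0 := by
        have hsplit : P ((1:ℝ)/2^n) ∘L P (σ - 1/2^n) = P σ := by
          rw [hPmul _ _ (by positivity) (by linarith)]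
          norm_num
        rw [← hsplit, ← comp_assoc, hiter n, zero_comp]
      rw [hzero, norm_zero]
      positivity
  -- main case
  set nX := ‖X‖ with hnX
  set nA := ‖X ∘L A‖ with hnA
  set l := nA / nX with hl'
  have hl : 0 < l := div_pos hXA hX
  have hXadj : ‖adjoint X‖ = nX := LinearIsometryEquiv.norm_map _ X
  have hXXadj : ‖X ∘L adjoint X‖ = nX * nX := hnormsq X
  have hXAXadj : ‖X ∘L A ∘L adjoint X‖ ≤ nA * nX := by
    rw [← comp_assoc]
    exact (opNorm_comp_le _ _).trans (by rw [hXadj])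
  have hgoal : ‖X ∘L P σ‖ * ‖X ∘L P σ‖ ≤
      (nX ^ (1 - σ) * nA ^ σ) * (nX ^ (1 - σ) * nA ^ σ) := by
    rcases le_or_gt σ (1/2) with hhalf | hhalf
    · -- σ ≤ 1/2 : apply key lemma with Y = X, θ = σ + σ
      have hkey := stmt10.keyLemma A hA X (θ := σ + σ) (by linarith) (by linarith) hl
      rw [hsq σ hσ0, hPs (σ + σ)]
      refine hkey.trans ?_
      have h2 : l ^ (σ + σ - 1) * (σ + σ) * ‖X ∘L A ∘L adjoint X‖ ≤
          l ^ (σ + σ - 1) * (σ + σ) * (nA * nX) := by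
        apply mul_le_mul_of_nonneg_left hXAXadj
        positivity
      have h3 : l ^ (σ + σ) * (1 - (σ + σ)) * ‖X ∘L adjoint X‖ =
          l ^ (σ + σ) * (1 - (σ + σ)) * (nX * nX) := by rw [hXXadj]
      have hfin : l ^ (σ + σ) * (1 - (σ + σ)) * (nX * nX)
            + l ^ (σ + σ - 1) * (σ + σ) * (nA * nX)
          = (nX ^ (1 - σ) * nA ^ σ) * (nX ^ (1 - σ) * nA ^ σ) := by
        have e1 : l ^ (σ + σ - 1) = l ^ (σ + σ) * (nX / nA) := by
          rw [Real.rpow_sub hl, Real.rpow_one, hl']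
          field_simp
        have e2 : l ^ (σ + σ) * (1 - (σ + σ)) * (nX * nX)
              + l ^ (σ + σ - 1) * (σ + σ) * (nA * nX) = l ^ (σ + σ) * (nX * nX) := by
          rw [e1]
          field_simp
          ring
        rw [e2, hl']
        exact stmt10.calc1 hX hXA
      linarith
    · -- σ ≥ 1/2 : Y = X ∘L P (1/2), θ = σ + σ - 1
      set Y := X ∘L P (1/2 : ℝ) with hY
      have hYadj : adjoint Y = P (1/2 : ℝ) ∘L adjoint X := by
        rw [hY, adjoint_comp, hsa]
      have hI2 : Y ∘L adjoint Y = X ∘L (A ∘L adjoint X) := by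
        rw [hYadj, hY, comp_assoc, ← comp_assoc (P (1/2:ℝ)) (P (1/2:ℝ)) (adjoint X),
          hPmul _ _ (by norm_num) (by norm_num)]
        norm_num [hP1]
      have hI1 : Y ∘L (P (σ + σ - 1) ∘L adjoint Y) = X ∘L (P (σ + σ) ∘L adjoint X) := by
        rw [hYadj, hY, comp_assoc]
        rw [← comp_assoc (P (σ+σ-1)) (P (1/2:ℝ)) (adjoint X), hPmul _ _ (by linarith) (by norm_num)]
        rw [← comp_assoc (P (1/2:ℝ)) (P (σ+σ-1+1/2)) (adjoint X),
          hPmul _ _ (by norm_num) (by linarith)]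
        norm_num
        ring_nf
      have hI3 : Y ∘L (A ∘L adjoint Y) = (X ∘L A) ∘L adjoint (X ∘L A) := by
        rw [hYadj, hY, adjoint_comp, hA.isSelfAdjoint.adjoint_eq, comp_assoc]
        rw [← hP1, ← comp_assoc (P 1) (P (1/2:ℝ)) (adjoint X), hPmul _ _ (by norm_num) (by norm_num)]
        rw [← comp_assoc (P (1/2:ℝ)) (P (1+1/2)) (adjoint X), hPmul _ _ (by norm_num) (by linarith)]
        rw [show (1:ℝ)/2 + (1 + 1/2) = 1 + 1 by norm_num, ← hPmul 1 1 (by norm_num) (by norm_num)]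
        simp only [comp_assoc]
      have hkey := stmt10.keyLemma A hA Y (θ := σ + σ - 1) (by linarith) (by linarith) hl
      rw [hsq σ hσ0, ← hI1, hPs (σ + σ - 1)]
      have hYY : ‖Y ∘L adjoint Y‖ ≤ nA * nX := by rw [hI2]; exact hXAXadj
      have hYAY : ‖Y ∘L A ∘L adjoint Y‖ = nA * nA := by
        rw [hI3, hnormsq]
      rw [hYAY] at hkey
      refine hkey.trans ?_
      have h2 : l ^ (σ + σ - 1) * (1 - (σ + σ - 1)) * ‖Y ∘L adjoint Y‖ ≤
          l ^ (σ + σ - 1) * (1 - (σ + σ - 1)) * (nA * nX) := by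
        apply mul_le_mul_of_nonneg_left hYY
        have h9 : 0 ≤ 1 - (σ + σ - 1) := by linarith
        positivity
      have hfin : l ^ (σ + σ - 1) * (1 - (σ + σ - 1)) * (nA * nX)
            + l ^ (σ + σ - 1 - 1) * (σ + σ - 1) * (nA * nA)
          = (nX ^ (1 - σ) * nA ^ σ) * (nX ^ (1 - σ) * nA ^ σ) := by
        have e1 : l ^ (σ + σ - 1 - 1) = l ^ (σ + σ - 1) * (nX / nA) := by
          rw [Real.rpow_sub hl, Real.rpow_one, hl']
          field_simp
        have e2 : l ^ (σ + σ - 1) * (1 - (σ + σ - 1)) * (nA * nX)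
              + l ^ (σ + σ - 1 - 1) * (σ + σ - 1) * (nA * nA)
            = l ^ (σ + σ - 1) * (nA * nX) := by
          rw [e1]
          field_simp
          ring
        rw [e2, hl']
        exact stmt10.calc2 hX hXA
      linarith
  exact stmt10.sqle (norm_nonneg _) (by positivity) hgoal
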